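/- Let X be a strong PP-space, Y a topological space and (Z, γ, z*) a contractible space. Let f : X × Y → Z be such that the map x ↦ f(x,y) is continuous for every y ∈ Y and the set {x ∈ X : the map y ↦ f(x,y) is Baire-one} is dense in X. Then f is the pointwise limit of a sequence of Baire-one maps X × Y → Z (i.e. f belongs to the second Baire class, so (X, Y, Z) is a Rudin 1-triple). -/

import Mathlib

open Set Function Filter Topology

universe u

/-- An *equiconnecting* map on `Z`: a map `λ : Z × Z × [0,1] → Z`, continuous on
`Z × Z × [0,1]`, with `λ(x,y,0) = x`, `λ(x,y,1) = y` and `λ(x,x,t) = x`. -/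
structure IsEquiconnecting {Z : Type*} [TopologicalSpace Z] (lam : Z → Z → ℝ → Z) : Prop where
  continuousOn : ContinuousOn (fun p : Z × Z × ℝ => lam p.1 p.2.1 p.2.2)
    (Set.univ ×ˢ Set.univ ×ˢ Set.Icc (0 : ℝ) 1)
  map_zero : ∀ x y : Z, lam x y 0 = x
  map_one : ∀ x y : Z, lam x y 1 = y
  map_diag : ∀ x : Z, ∀ t ∈ Set.Icc (0 : ℝ) 1, lam x x t = x

/-- `lambdaIter lam n` is the map `λ_{n+1} : Z^{n+1} × S_{n+1} → Z` from the paper,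
defined recursively. -/
noncomputable def lambdaIter {Z : Type*} (lam : Z → Z → ℝ → Z) :
    (n : ℕ) → (Fin (n + 1) → Z) → (Fin (n + 1) → ℝ) → Z
  | 0, x, _ => x 0
  | n + 1, x, a =>
      if 0 < a 0 + a 1 then
        lambdaIter lam n
          (Fin.cons (lam (x 0) (x 1) (a 1 / (a 0 + a 1))) fun i => x i.succ.succ)
          (Fin.cons (a 0 + a 1) fun i => a i.succ.succ)
      else
        lambdaIter lam n (fun i => x i.succ) fun i => a i.succ

/-- `lambdaIterSet lam A n` is the set `λ^n(A)`:  `λ^0(A) = A` and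
`λ^{n+1}(A) = λ(λ^n(A) × A × [0,1])`. -/
def lambdaIterSet {Z : Type*} (lam : Z → Z → ℝ → Z) (A : Set Z) : ℕ → Set Z
  | 0 => A
  | n + 1 => (fun p : Z × Z × ℝ => lam p.1 p.2.1 p.2.2) ''
      (lambdaIterSet lam A n ×ˢ A ×ˢ Set.Icc (0 : ℝ) 1)

/-- `λ^∞(A) = ⋃_{n ≥ 1} λ^n(A)`. -/
def lambdaInftySet {Z : Type*} (lam : Z → Z → ℝ → Z) (A : Set Z) : Set Z :=
  ⋃ n : ℕ, lambdaIterSet lam A (n + 1)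

/-- An equiconnected space `(Z, λ)` is locally convex if every point has arbitrarily small
neighborhoods `V` with `λ^∞(V)` inside a given neighborhood. -/
def IsLocallyConvexEquiconnected {Z : Type*} [TopologicalSpace Z] (lam : Z → Z → ℝ → Z) :
    Prop :=
  ∀ z : Z, ∀ U ∈ nhds z, ∃ V ∈ nhds z, lambdaInftySet lam V ⊆ U

/-- A map is Baire-one if it is the pointwise limit of a sequence of continuous maps. -/
def BaireOne {Y Z : Type*} [TopologicalSpace Y] [TopologicalSpace Z] (g : Y → Z) : Prop :=
  ∃ h : ℕ → Y → Z, (∀ n, Continuous (h n)) ∧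
    ∀ y, Filter.Tendsto (fun n => h n y) Filter.atTop (nhds (g y))

/-- A locally finite partition of unity on `X`: continuous `[0,1]`-valued functions whose
supports (closures of the sets where they are nonzero) form a locally finite family and whose
pointwise sum is `1`. -/
def IsLocFinPartitionOfUnity {I X : Type*} [TopologicalSpace X] (φ : I → X → ℝ) : Prop :=
  (∀ i, Continuous (φ i)) ∧ (∀ i x, φ i x ∈ Set.Icc (0 : ℝ) 1) ∧
    (LocallyFinite fun i => closure (Function.support (φ i))) ∧ ∀ x, ∑ᶠ i, φ i x = 1

/-- A strong PP-space: for every dense `D ⊆ X` there are a sequence of locally finite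
partitions of unity and families of points of `D` such that points attached to the supports
containing `x` converge to `x` uniformly in the index, in the sense of condition (3). -/
def IsStrongPPSpace (X : Type*) [TopologicalSpace X] : Prop :=
  ∀ D : Set X, Dense D →
    ∃ (I : ℕ → Type u) (φ : ∀ n, I n → X → ℝ) (p : ∀ n, I n → X),
      (∀ n, IsLocFinPartitionOfUnity (φ n)) ∧ (∀ n i, p n i ∈ D) ∧
      ∀ x : X, ∀ U ∈ nhds x, ∃ n₀ : ℕ, ∀ n ≥ n₀, ∀ i : I n,
        x ∈ closure (Function.support (φ n i)) → p n i ∈ U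

/-- A zero set: the preimage of `{0}` under a continuous function `X → [0,1]`. -/
def IsZeroSet {X : Type*} [TopologicalSpace X] (A : Set X) : Prop :=
  ∃ f : X → ℝ, Continuous f ∧ (∀ x, f x ∈ Set.Icc (0 : ℝ) 1) ∧ A = f ⁻¹' {0}

/-- A cozero set: the preimage of `(0,1]` under a continuous function `X → [0,1]`. -/
def IsCozeroSet {X : Type*} [TopologicalSpace X] (A : Set X) : Prop :=
  ∃ f : X → ℝ, Continuous f ∧ (∀ x, f x ∈ Set.Icc (0 : ℝ) 1) ∧ A = f ⁻¹' Set.Ioc (0 : ℝ) 1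

/-- A functionally ambiguous set: simultaneously a countable union of zero sets and a
countable intersection of cozero sets. -/
def IsFunctionallyAmbiguous {X : Type*} [TopologicalSpace X] (A : Set X) : Prop :=
  (∃ F : ℕ → Set X, (∀ n, IsZeroSet (F n)) ∧ A = ⋃ n, F n) ∧
    ∃ B : ℕ → Set X, (∀ n, IsCozeroSet (B n)) ∧ A = ⋂ n, B n

/-- A discrete family of sets: every point has a neighborhood meeting at most one member. -/
def IsDiscreteFamily {I X : Type*} [TopologicalSpace X] (A : I → Set X) : Prop :=
  ∀ x : X, ∃ U ∈ nhds x, {i : I | (U ∩ A i).Nonempty}.Subsingleton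

/-- Weakly collectionwise normal: every discrete family of zero sets can be separated by a
discrete family of cozero sets. -/
def WeaklyCollectionwiseNormal (X : Type*) [TopologicalSpace X] : Prop :=
  ∀ (S : Type u) (F : S → Set X), (∀ s, IsZeroSet (F s)) → IsDiscreteFamily F →
    ∃ U : S → Set X, (∀ s, IsCozeroSet (U s)) ∧ IsDiscreteFamily U ∧ ∀ s, F s ⊆ U s

/-- A contracting structure on `Z`: a continuous `γ : Z × [0,1] → Z` with `γ(z,0) = z` and
`γ(z,1) = z₀`. -/
structure IsContracting {Z : Type*} [TopologicalSpace Z] (γ : Z → ℝ → Z) (z₀ : Z) :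
    Prop where
  continuousOn : ContinuousOn (fun p : Z × ℝ => γ p.1 p.2) (Set.univ ×ˢ Set.Icc (0 : ℝ) 1)
  map_zero : ∀ z : Z, γ z 0 = z
  map_one : ∀ z : Z, γ z 1 = z₀

lemma baireOne_glue {X Y Z I : Type*} [TopologicalSpace X] [TopologicalSpace Y]
    [TopologicalSpace Z] (r : I → I → Prop) (hr : IsWellOrder I r)
    (γ : Z → ℝ → Z) (z₀ : Z) (hγ : IsContracting γ z₀)
    (φ : I → X → ℝ) (hφ : IsLocFinPartitionOfUnity φ)
    (F : I → Y → Z) (h : I → ℕ → Y → Z)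
    (hcont : ∀ i m, Continuous (h i m))
    (hlim : ∀ i y, Tendsto (fun m => h i m y) atTop (nhds (F i y)))
    (G : X × Y → Z)
    (hG : ∀ x : X, ∃ i : I, φ i x ≠ 0 ∧ (∀ j, r j i → φ j x = 0) ∧ ∀ y, G (x, y) = F i y) :
    BaireOne G := by
  classical
  obtain ⟨hφc, hφ01, hφlf, hφsum⟩ := hφ
  -- point finiteness
  have hpt : ∀ x : X, {i | φ i x ≠ 0}.Finite := by
    intro x
    apply (hφlf.point_finite x).subset
    intro i hi
    exact subset_closure (mem_support.mpr hi)
  -- σ i = sum of φ j over j < i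
  set σ : I → X → ℝ := fun i x => ∑ᶠ j, if r j i then φ j x else 0 with hσdef
  have hσc : ∀ i, Continuous (σ i) := by
    intro i
    apply continuous_finsum
    · intro j
      by_cases hji : r j i <;> simp [hji, hφc j, continuous_const]
    · apply hφlf.subset
      intro j
      refine subset_trans ?_ subset_closure
      intro x hx
      simp only [mem_support] at hx ⊢
      intro h0
      apply hx
      simp [h0]
  have hσ0 : ∀ i x, 0 ≤ σ i x := by
    intro i x
    apply finsum_nonneg
    intro j
    by_cases hji : r j i <;> simp [hji, (hφ01 j x).1]
  have hσge : ∀ i j x, r j i → φ j x ≤ σ i x := by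
    intro i j x hji
    have := single_le_finsum (f := fun j' => if r j' i then φ j' x else 0) j
      (by
        apply (hpt x).subset
        intro j' hj'
        simp only [mem_support] at hj'
        simp only [mem_setOf_eq]
        intro h0
        apply hj'
        simp [h0])
      (by intro j'; by_cases hj : r j' i <;> simp [hj, (hφ01 j' x).1])
    simpa [hji] using this
  -- the bump functions
  set w : I → ℕ → X → ℝ := fun i m x =>
    max 0 (min ((m : ℝ) * φ i x - 1) 1 - (m : ℝ) * σ i x) with hwdef
  have hwc : ∀ i m, Continuous (w i m) := by
    intro i m
    exact continuous_const.max ((((continuous_const.mul (hφc i)).sub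
      continuous_const).min continuous_const).sub (continuous_const.mul (hσc i)))
  have hw0 : ∀ i m x, 0 ≤ w i m x := fun i m x => le_max_left _ _
  have hw1 : ∀ i m x, w i m x ≤ 1 := by
    intro i m x
    apply max_le (by norm_num)
    have h1 : min ((m : ℝ) * φ i x - 1) 1 ≤ 1 := min_le_right _ _
    have h2 : 0 ≤ (m : ℝ) * σ i x := mul_nonneg (by positivity) (hσ0 i x)
    linarith
  -- consequences of positivity
  have hwpos : ∀ i m x, 0 < w i m x →
      1 < (m : ℝ) * φ i x ∧ (m : ℝ) * σ i x < 1 := by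
    intro i m x hpos
    have ht : 0 < min ((m : ℝ) * φ i x - 1) 1 - (m : ℝ) * σ i x := by
      rcases lt_max_iff.mp hpos with h | h
      · exact absurd h (lt_irrefl 0)
      · exact h
    have h1 : min ((m : ℝ) * φ i x - 1) 1 ≤ (m : ℝ) * φ i x - 1 := min_le_left _ _
    have h2 : min ((m : ℝ) * φ i x - 1) 1 ≤ 1 := min_le_right _ _
    have h3 : 0 ≤ (m : ℝ) * σ i x := mul_nonneg (by positivity) (hσ0 i x)
    constructor <;> linarith
  -- disjointness
  have hdisj : ∀ i j m x, 0 < w i m x → 0 < w j m x → i = j := by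
    have key : ∀ i j m x, r i j → 0 < w i m x → 0 < w j m x → False := by
      intro i j m x hij hi hj
      obtain ⟨hi1, _⟩ := hwpos i m x hi
      obtain ⟨_, hj2⟩ := hwpos j m x hj
      have := hσge j i x hij
      have hm : (0:ℝ) ≤ (m : ℝ) := by positivity
      nlinarith
    intro i j m x hi hj
    rcases (haveI := hr; trichotomous_of r i j) with hij | hij | hij
    · exact absurd (key i j m x hij hi hj) not_false
    · exact hij
    · exact absurd (key j i m x hij hj hi) not_false
  -- φ i x = 0 → w = 0
  have hwzero : ∀ i m x, φ i x = 0 → w i m x = 0 := by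
    intro i m x h0
    have h3 : 0 ≤ (m : ℝ) * σ i x := mul_nonneg (by positivity) (hσ0 i x)
    have hmin : ((m:ℝ) * 0 - 1) ⊓ 1 = -1 := by norm_num
    simp only [hwdef, h0, hmin]
    exact max_eq_left (by linarith)
  -- the approximating continuous maps
  set ψ : I → ℕ → X × Y → Z := fun i m q => γ (h i m q.2) (1 - w i m q.1) with hψdef
  have hψc : ∀ i m, Continuous (ψ i m) := by
    intro i m
    have hin : Continuous fun q : X × Y => (h i m q.2, 1 - w i m q.1) :=
      ((hcont i m).comp continuous_snd).prodMk
        (continuous_const.sub ((hwc i m).comp continuous_fst))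
    have := hγ.continuousOn.comp_continuous hin ?_
    · exact this
    · intro q
      have h1 := hw1 i m q.1
      have h0 := hw0 i m q.1
      simp only [Set.mem_prod, mem_univ, true_and, Set.mem_Icc]
      constructor <;> linarith
  have hψz : ∀ i m x y, w i m x = 0 → ψ i m (x, y) = z₀ := by
    intro i m x y h0
    simp only [hψdef, h0, sub_zero, hγ.map_one]
  -- the glued map
  set H : ℕ → X × Y → Z := fun m q =>
    if hx : ∃ i, 0 < w i m q.1 then ψ hx.choose m q else z₀ with hHdef
  have hHeq : ∀ i m x y, 0 < w i m x → H m (x, y) = ψ i m (x, y) := by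
    intro i m x y hpos
    have hx : ∃ i, 0 < w i m (x, y).1 := ⟨i, hpos⟩
    have := hdisj hx.choose i m x hx.choose_spec hpos
    simp only [hHdef, dif_pos hx, this]
  have hHmem : ∀ m x y, H m (x, y) = z₀ ∨
      ∃ i, 0 < w i m x ∧ H m (x, y) = ψ i m (x, y) := by
    intro m x y
    by_cases hx : ∃ i, 0 < w i m x
    · obtain ⟨i, hi⟩ := hx
      exact Or.inr ⟨i, hi, hHeq i m x y hi⟩
    · exact Or.inl (by simp only [hHdef, dif_neg hx])
  -- continuity of H m
  have hHc : ∀ m, Continuous (H m) := by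
    intro m
    rw [continuous_iff_continuousAt]
    rintro ⟨x₀, y₀⟩
    by_cases hx₀ : ∃ i, 0 < w i m x₀
    · obtain ⟨i, hi⟩ := hx₀
      apply ContinuousAt.congr ((hψc i m).continuousAt)
      have hU : IsOpen {q : X × Y | 0 < w i m q.1} :=
        (isOpen_lt continuous_const ((hwc i m).comp continuous_fst))
      apply Filter.eventuallyEq_of_mem (hU.mem_nhds (by exact hi))
      rintro ⟨x, y⟩ hq
      exact (hHeq i m x y hq).symm
    · push_neg at hx₀
      have hw0' : ∀ i, w i m x₀ = 0 := fun i => le_antisymm (hx₀ i) (hw0 i m x₀)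
      have hH0 : H m (x₀, y₀) = z₀ := by
        simp only [hHdef]
        rw [dif_neg]
        push_neg
        intro i
        exact hx₀ i
      rw [ContinuousAt, hH0, Filter.tendsto_def]
      intro W hW
      obtain ⟨V, hV, hSfin⟩ := hφlf x₀
      -- eventually all relevant ψ's are in W
      have hev : ∀ᶠ q : X × Y in nhds (x₀, y₀),
          ∀ i ∈ {i | (closure (support (φ i)) ∩ V).Nonempty}, ψ i m q ∈ W := by
        rw [hSfin.eventually_all]
        intro i _
        have : ψ i m (x₀, y₀) = z₀ := hψz i m x₀ y₀ (hw0' i)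
        have := (hψc i m).continuousAt (x := (x₀, y₀))
        rw [ContinuousAt] at this
        exact this (by rwa [hψz i m x₀ y₀ (hw0' i)])
      have hevV : ∀ᶠ q : X × Y in nhds (x₀, y₀), q.1 ∈ V :=
        continuous_fst.continuousAt (by simpa using hV)
      filter_upwards [hev, hevV] with q hq hqV
      simp only [mem_preimage]
      rcases hHmem m q.1 q.2 with h0 | ⟨i, hi, heq⟩
      · simp only [Prod.mk.eta] at h0
        rw [h0]
        exact mem_of_mem_nhds hW
      · have hφi : φ i q.1 ≠ 0 := by
          intro h0
          rw [hwzero i m q.1 h0] at hi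
          exact lt_irrefl 0 hi
        have hiS : i ∈ {i | (closure (support (φ i)) ∩ V).Nonempty} :=
          ⟨q.1, subset_closure (mem_support.mpr hφi), hqV⟩
        simp only [Prod.mk.eta] at heq
        rw [heq]
        exact hq i hiS
  -- pointwise convergence
  refine ⟨H, hHc, ?_⟩
  rintro ⟨x, y⟩
  obtain ⟨i, hi0, himin, hiG⟩ := hG x
  have hφpos : 0 < φ i x := lt_of_le_of_ne (hφ01 i x).1 (Ne.symm hi0)
  have hσz : σ i x = 0 := by
    apply finsum_eq_zero_of_forall_eq_zero
    intro j
    by_cases hji : r j i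
    · simp [hji, himin j hji]
    · simp [hji]
  obtain ⟨M, hM⟩ := exists_nat_ge (2 / φ i x)
  have hev : (fun m => H m (x, y)) =ᶠ[atTop] fun m => h i m y := by
    rw [EventuallyEq, eventually_atTop]
    refine ⟨M, fun m hm => ?_⟩
    have hmφ : (2 : ℝ) ≤ (m : ℝ) * φ i x := by
      have h1 : 2 / φ i x ≤ (m : ℝ) := le_trans hM (by exact_mod_cast hm)
      rw [div_le_iff₀ hφpos] at h1
      linarith
    have hwm : w i m x = 1 := by
      simp only [hwdef, hσz, mul_zero, sub_zero]
      rw [min_eq_right (by linarith), max_eq_right (by norm_num)]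
    rw [hHeq i m x y (by rw [hwm]; norm_num)]
    simp only [hψdef, hwm, sub_self, hγ.map_zero]
  have : Tendsto (fun m => h i m y) atTop (nhds (G (x, y))) := by
    rw [hiG y]
    exact hlim i y
  exact this.congr' hev.symm

/-- If `X` is a strong PP-space, `Y` a topological space and `(Z, γ, z₀)` a
contractible space, then every `f : X × Y → Z` which is continuous in the first variable and
has Baire-one `y`-sections for a dense set of `x`'s is a pointwise limit of a sequence of
Baire-one maps (hence of the second Baire class), i.e. `(X, Y, Z)` is a Rudin `1`-triple. -/
theorem rudin_one_triple_of_strongPP_contractible {X Y Z : Type*} [TopologicalSpace X]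
    [TopologicalSpace Y] [TopologicalSpace Z] (hX : IsStrongPPSpace.{u} X)
    (γ : Z → ℝ → Z) (z₀ : Z) (hγ : IsContracting γ z₀)
    (f : X × Y → Z)
    (hsep : ∀ y : Y, Continuous fun x => f (x, y))
    (hdense : Dense {x : X | BaireOne fun y => f (x, y)}) :
    ∃ g : ℕ → X × Y → Z, (∀ n, BaireOne (g n)) ∧
      ∀ q : X × Y, Filter.Tendsto (fun n => g n q) Filter.atTop (nhds (f q)) := by
    classical
  obtain ⟨I, φ, p, hpart, hpD, hPP⟩ := hX {x : X | BaireOne fun y => f (x, y)} hdense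
  have hB : ∀ n i, BaireOne fun y => f (p n i, y) := fun n i => hpD n i
  choose h hc hl using hB
  have hne : ∀ n (x : X), {i : I n | φ n i x ≠ 0}.Nonempty := by
    intro n x
    by_contra hcon
    rw [Set.not_nonempty_iff_eq_empty] at hcon
    have hz : ∀ i, φ n i x = 0 := by
      intro i; by_contra h0
      exact (Set.eq_empty_iff_forall_notMem.mp hcon i) h0
    have hs := (hpart n).2.2.2 x
    rw [finsum_eq_zero_of_forall_eq_zero hz] at hs
    norm_num at hs
  have wf : ∀ n, WellFounded (WellOrderingRel : I n → I n → Prop) := fun n =>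
    (WellOrderingRel.isWellOrder).toIsWellFounded.wf
  set idx : ∀ n, X → I n := fun n x => (wf n).min {i | φ n i x ≠ 0} (hne n x) with hidx
  refine ⟨fun n q => f (p n (idx n q.1), q.2), ?_, ?_⟩
  · intro n
    apply baireOne_glue (WellOrderingRel) (WellOrderingRel.isWellOrder) γ z₀ hγ (φ n)
      (hpart n) (fun i y => f (p n i, y)) (h n) (hc n) (hl n)
    intro x
    refine ⟨idx n x, (wf n).min_mem _ (hne n x), ?_, fun y => rfl⟩
    intro j hj
    by_contra h0
    exact (wf n).not_lt_min {i | φ n i x ≠ 0} h0 hj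
  · rintro ⟨x, y⟩
    rw [tendsto_atTop_nhds]
    intro U hU hUopen
    have hV : (fun x => f (x, y)) ⁻¹' U ∈ nhds x :=
      (hUopen.preimage (hsep y)).mem_nhds hU
    obtain ⟨n₀, hn₀⟩ := hPP x _ hV
    refine ⟨n₀, fun n hn => ?_⟩
    have hmem : φ n (idx n x) x ≠ 0 := (wf n).min_mem {i | φ n i x ≠ 0} (hne n x)
    have hcl : x ∈ closure (Function.support (φ n (idx n x))) :=
      subset_closure (Function.mem_support.mpr hmem)
    exact hn₀ n hn _ hcl
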